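/- Let 𝒫 be a finite set of properties, let X = ℝⁿ or X = [0,∞)ⁿ, and for each p ∈ 𝒫 let γ_p : ℝⁿ → ℝ be a scoring function. Suppose the strict epistemic pooling principle holds for Hadamard (componentwise product) pooling for all e, f ∈ X (for every p ∈ 𝒫, γ_p(e ⊙ f) > 0 ↔ γ_p(e) > 0 ∨ γ_p(f) > 0), and suppose every epistemic state is realized: for every subset Q ⊆ 𝒫 there exists e ∈ X with Γ(e) = Q, where Γ(e) = {p ∈ 𝒫 : γ_p(e) > 0}. Then n ≥ |𝒫|. -/

import Mathlib

/-- If the strict epistemic pooling principle holds for Hadamard pooling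
on X = ℝⁿ or X = [0,∞)ⁿ for a finite set of properties 𝒫, and every epistemic
state Q ⊆ 𝒫 is realized by some embedding in X, then n ≥ |𝒫|. -/
theorem had_pooling_dimension_bound (n : ℕ) (P : Type*) [Fintype P]
    (X : Set (Fin n → ℝ))
    (hX : X = Set.univ ∨ X = {x : Fin n → ℝ | ∀ i, 0 ≤ x i})
    (γ : P → (Fin n → ℝ) → ℝ)
    (hpool : ∀ e ∈ X, ∀ f ∈ X, ∀ p : P,
      γ p (fun i => e i * f i) > 0 ↔ (γ p e > 0 ∨ γ p f > 0))
    (hreal : ∀ Q : Set P, ∃ e ∈ X, ∀ p : P, γ p e > 0 ↔ p ∈ Q) :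
    Fintype.card P ≤ n := by
  classical
  have hmem : ∀ v : Fin n → ℝ, (∀ i, 0 ≤ v i) → v ∈ X := by
    rcases hX with h | h <;> intro v hv <;> simp [h] <;> try exact hv
  -- key: for nonneg vectors with the same zero set, epistemic states coincide
  have key : ∀ e e' : Fin n → ℝ, (∀ i, 0 ≤ e i) → (∀ i, 0 ≤ e' i) →
      (∀ i, e i = 0 ↔ e' i = 0) → ∀ p, γ p e' > 0 → γ p e > 0 := by
    intro e e' he he' hz p hp
    set k : Fin n → ℝ := fun i => e i / e' i with hk
    have hkn : ∀ i, 0 ≤ k i := fun i => div_nonneg (he i) (he' i)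
    have heq : e = fun i => e' i * k i := by
      funext i
      by_cases h : e' i = 0
      · simp [hk, h, (hz i).mpr h]
      · show e i = e' i * (e i / e' i)
        field_simp [hk, h]
    rw [heq]
    exact (hpool e' (hmem e' he') k (hmem k hkn) p).mpr (Or.inl hp)
  have hsq : ∀ Q : Set P, ∃ e : Fin n → ℝ, (∀ i, 0 ≤ e i) ∧ ∀ p, γ p e > 0 ↔ p ∈ Q := by
    intro Q
    obtain ⟨e, heX, hQ⟩ := hreal Q
    exact ⟨fun i => e i * e i, fun i => mul_self_nonneg _,
      fun p => by rw [hpool e heX e heX p, or_self]; exact hQ p⟩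
  choose E hEn hEQ using hsq
  have hinj : Function.Injective (fun Q : Set P => {i | E Q i ≠ 0}) := by
    intro Q Q' hEq
    have hz : ∀ i, E Q i = 0 ↔ E Q' i = 0 := by
      intro i
      have h := Set.ext_iff.mp hEq i
      simp only [Set.mem_setOf_eq] at h
      exact not_iff_not.mp h
    ext p
    rw [← hEQ Q p, ← hEQ Q' p]
    exact ⟨fun h => key (E Q') (E Q) (hEn Q') (hEn Q) (fun i => (hz i).symm) p h,
           fun h => key (E Q) (E Q') (hEn Q) (hEn Q') hz p h⟩
  have hcard := Fintype.card_le_of_injective _ hinj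
  have h2 : 2 ^ Fintype.card P ≤ 2 ^ n := by simpa using hcard
  exact (Nat.pow_le_pow_iff_right (by norm_num)).mp h2
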